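/- The generating function for the number of Schmidt type 2-fold partition diamonds satisfies ∑_{n≥0} s_2(n) q^n = ∏_{n≥1} (1 + q^n) / (1 - q^n)^3, as an identity of formal power series in q over ℤ. -/

import Mathlib

open Finset PowerSeries

/-- A `d`-fold partition diamond: nonnegative integers `a 0, a 1, …` together with
`b k j` (representing `b_{k+1, j+1}`) satisfying `a k ≥ b k j ≥ a (k+1)`,
with all but finitely many entries equal to zero. -/
structure DFold (d : ℕ) where
  a : ℕ → ℕ
  b : ℕ → Fin d → ℕ
  upper : ∀ k j, b k j ≤ a k
  lower : ∀ k j, a (k + 1) ≤ b k j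
  fin : ∃ N, ∀ k, N ≤ k → a k = 0

/-- `sFold d n`: the number of Schmidt type `d`-fold partition diamonds of `n`
(only the links `a k` are summed). -/
noncomputable def sFold (d n : ℕ) : ℕ :=
  Set.ncard {D : DFold d | (∑ᶠ k, D.a k) = n}

namespace SchmidtAux


/-- The factor series `∑_{d≥0} (d+1)² q^{kd}`. -/
noncomputable def Fk (k : ℕ) : PowerSeries ℤ :=
  PowerSeries.mk fun m => if k ∣ m then ((m / k + 1 : ℕ) : ℤ) ^ 2 else 0

lemma Fk_mul_cubed {k : ℕ} (hk : 1 ≤ k) :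
    Fk k * (1 - (X : ℤ⟦X⟧) ^ k) ^ 3 = 1 + X ^ k := by
  have hexp : Fk k * (1 - (X : ℤ⟦X⟧) ^ k) ^ 3
      = Fk k + ((Fk k * X ^ (k * 2)) + (Fk k * X ^ (k * 2)) + (Fk k * X ^ (k * 2)))
        - ((Fk k * X ^ (k * 1)) + (Fk k * X ^ (k * 1)) + (Fk k * X ^ (k * 1)))
        - Fk k * X ^ (k * 3) := by
    rw [pow_mul, pow_mul, pow_mul]; ring
  ext m
  rw [hexp]
  simp only [map_sub, map_add, coeff_mul_X_pow', Fk, coeff_mk, coeff_one, coeff_X_pow]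
  by_cases hd : k ∣ m
  · obtain ⟨d, rfl⟩ := hd
    have hk0 : 0 < k := hk
    have hdvd : ∀ j : ℕ, k * j ≤ k * d → k ∣ k * d - k * j := fun j _ => by
      rw [← Nat.mul_sub]; exact dvd_mul_right _ _
    have hsub : ∀ j : ℕ, (k * d - k * j) / k = d - j := fun j => by
      rw [← Nat.mul_sub, Nat.mul_div_cancel_left _ hk0]
    have hself : k * d / k = d := Nat.mul_div_cancel_left _ hk0
    have hle : ∀ j : ℕ, k * j ≤ k * d ↔ j ≤ d := fun j =>
      ⟨fun h => Nat.le_of_mul_le_mul_left h hk0, fun h => Nat.mul_le_mul_left _ h⟩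
    rcases d with _ | _ | _ | d
    · have e0 : k * 0 = 0 := by ring
      rw [e0]
      have h1 : ¬ k * 1 ≤ 0 := by omega
      have h2 : ¬ k * 2 ≤ 0 := by omega
      have h3 : ¬ k * 3 ≤ 0 := by omega
      have hkne : ¬ (0 = k) := by omega
      rw [if_neg h1, if_neg h2, if_neg h3, if_pos (dvd_zero k), if_pos rfl, if_neg hkne]
      norm_num
    · have h1 : k * 1 ≤ k * 1 := le_refl _
      have h2 : ¬ k * 2 ≤ k * 1 := by rw [hle]; omega
      have h3 : ¬ k * 3 ≤ k * 1 := by rw [hle]; omega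
      rw [if_pos h1, if_neg h2, if_neg h3, if_pos (hdvd 1 h1), if_pos (dvd_mul_right k 1),
        hsub 1, hself]
      have hne0 : ¬ k * 1 = 0 := by omega
      have heqk : k * 1 = k := by omega
      rw [if_neg hne0, if_pos heqk]
      norm_num
    · have h1 : k * 1 ≤ k * 2 := by rw [hle]; omega
      have h2 : k * 2 ≤ k * 2 := le_refl _
      have h3 : ¬ k * 3 ≤ k * 2 := by rw [hle]; omega
      rw [if_pos h1, if_pos h2, if_neg h3, if_pos (hdvd 1 h1), if_pos (hdvd 2 h2),
        if_pos (dvd_mul_right k 2), hsub 1, hsub 2, hself]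
      have hne0 : ¬ k * 2 = 0 := by omega
      have hnek : ¬ k * 2 = k := by omega
      rw [if_neg hne0, if_neg hnek]
      norm_num
    · have h1 : k * 1 ≤ k * (d + 3) := by rw [hle]; omega
      have h2 : k * 2 ≤ k * (d + 3) := by rw [hle]; omega
      have h3 : k * 3 ≤ k * (d + 3) := by rw [hle]; omega
      rw [if_pos h1, if_pos h2, if_pos h3, if_pos (hdvd 1 h1), if_pos (hdvd 2 h2),
        if_pos (hdvd 3 h3), if_pos (dvd_mul_right k (d + 3)), hsub 1, hsub 2, hsub 3, hself]
      have hne0 : ¬ k * (d + 3) = 0 := by positivity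
      have hnek : ¬ k * (d + 3) = k := by
        intro h; nlinarith
      rw [if_neg hne0, if_neg hnek]
      have e1 : d + 3 - 1 = d + 2 := by omega
      have e2 : d + 3 - 2 = d + 1 := by omega
      have e3 : d + 3 - 3 = d := by omega
      rw [e1, e2, e3]
      push_cast
      ring
  · have hf : ∀ j : ℕ, k * j ≤ m → ¬ k ∣ m - k * j := by
      intro j hj hdvd'
      have h2 : m - k * j + k * j = m := Nat.sub_add_cancel hj
      exact hd (h2 ▸ dvd_add hdvd' (dvd_mul_right k j))
    have hm0 : ¬ m = 0 := fun h => hd (h ▸ dvd_zero k)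
    have hmk : ¬ m = k := fun h => hd (h ▸ dvd_refl k)
    rw [if_neg hd, if_neg hm0, if_neg hmk]
    have t : ∀ j : ℕ, (if k * j ≤ m then
        (if k ∣ m - k * j then (((m - k * j) / k + 1 : ℕ) : ℤ) ^ 2 else 0) else 0) = 0 := by
      intro j; split_ifs with h h'
      · exact absurd h' (hf j h)
      · rfl
      · rfl
    rw [t 1, t 2, t 3]
    ring



lemma DFold.ext' {d : ℕ} {D E : DFold d} (h1 : D.a = E.a) (h2 : D.b = E.b) : D = E := by
  obtain ⟨a, b, u, lo, f⟩ := D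
  obtain ⟨a', b', u', lo', f'⟩ := E
  have h1' : a = a' := h1
  have h2' : b = b' := h2
  subst h1'; subst h2'
  rfl

noncomputable def dd (l : ℕ →₀ ℕ) (k : ℕ) : ℕ := l k / k

noncomputable def aa (N : ℕ) (l : ℕ →₀ ℕ) (k : ℕ) : ℕ := ∑ j ∈ Icc (k + 1) N, dd l j

def Dset (m N : ℕ) : Finset (ℕ →₀ ℕ) :=
  (Finset.finsuppAntidiag (Icc 1 N) m).filter fun l => ∀ k ∈ Icc 1 N, k ∣ l k

lemma Dset_sum {m N : ℕ} {l : ℕ →₀ ℕ} (hl : l ∈ Dset m N) : ∑ k ∈ Icc 1 N, l k = m :=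
  ((Finset.mem_finsuppAntidiag.mp (Finset.mem_filter.mp hl).1)).1

lemma Dset_supp {m N : ℕ} {l : ℕ →₀ ℕ} (hl : l ∈ Dset m N) {k : ℕ} (hk : k ∉ Icc 1 N) :
    l k = 0 := by
  by_contra h
  exact hk (((Finset.mem_finsuppAntidiag.mp (Finset.mem_filter.mp hl).1)).2
    (Finsupp.mem_support_iff.mpr h))

lemma Dset_dvd {m N : ℕ} {l : ℕ →₀ ℕ} (hl : l ∈ Dset m N) {k : ℕ} (hk : k ∈ Icc 1 N) :
    k ∣ l k := (Finset.mem_filter.mp hl).2 k hk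

lemma aa_succ (N : ℕ) (l : ℕ →₀ ℕ) {k : ℕ} (h : k + 1 ≤ N) :
    aa N l k = dd l (k + 1) + aa N l (k + 1) := by
  unfold aa
  rw [show Icc (k + 1) N = insert (k + 1) (Icc (k + 2) N) by
    ext x; simp only [mem_Icc, mem_insert]; omega]
  rw [Finset.sum_insert (by simp [mem_Icc])]

lemma aa_zero (N : ℕ) (l : ℕ →₀ ℕ) {k : ℕ} (h : N ≤ k) : aa N l k = 0 := by
  unfold aa
  rw [Finset.Icc_eq_empty (by omega), Finset.sum_empty]

lemma aa_sub (N : ℕ) (l : ℕ →₀ ℕ) {k : ℕ} (h1 : 1 ≤ k) (h2 : k ≤ N) :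
    dd l k = aa N l (k - 1) - aa N l k := by
  have h3 : k - 1 + 1 = k := by omega
  have h4 := aa_succ N l (k := k - 1) (by omega)
  rw [h3] at h4
  omega

lemma weight_aa {m N : ℕ} {l : ℕ →₀ ℕ} (hl : l ∈ Dset m N) : (∑ᶠ k, aa N l k) = m := by
  have hsupp : Function.support (aa N l) ⊆ ↑(range N) := by
    intro k hk
    simp only [Function.mem_support] at hk
    simp only [coe_range, Set.mem_Iio]
    by_contra h
    exact hk (aa_zero N l (by omega))
  rw [finsum_eq_sum_of_support_subset _ hsupp]
  have step : ∀ k ∈ range N, aa N l k = ∑ j ∈ Icc 1 N, if k + 1 ≤ j then dd l j else 0 := by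
    intro k _
    rw [← Finset.sum_filter]
    unfold aa
    congr 1
    ext x
    simp only [mem_Icc, mem_filter]
    omega
  rw [Finset.sum_congr rfl step, Finset.sum_comm]
  have inner : ∀ j ∈ Icc 1 N, (∑ k ∈ range N, if k + 1 ≤ j then dd l j else 0) = l j := by
    intro j hj
    rw [← Finset.sum_filter]
    rw [show (range N).filter (fun k => k + 1 ≤ j) = range j by
      ext x
      simp only [mem_filter, mem_range]
      have := (mem_Icc.mp hj).2
      omega]
    rw [Finset.sum_const, card_range, smul_eq_mul]
    exact Nat.mul_div_cancel' (Dset_dvd hl hj)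
  rw [Finset.sum_congr rfl inner]
  exact Dset_sum hl

abbrev TT (m N : ℕ) :=
  Σ l : {l : ℕ →₀ ℕ // l ∈ Dset m N},
    ∀ k : {x : ℕ // x ∈ Icc 1 N}, Fin (dd l.1 (k : ℕ) + 1) × Fin (dd l.1 (k : ℕ) + 1)

noncomputable def bb (N : ℕ) (l : ℕ →₀ ℕ)
    (c : ∀ k : {x : ℕ // x ∈ Icc 1 N}, Fin (dd l (k : ℕ) + 1) × Fin (dd l (k : ℕ) + 1))
    (k : ℕ) (j : Fin 2) : ℕ :=
  aa N l (k + 1) +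
    if h : k + 1 ∈ Icc 1 N then
      (if j = 0 then ((c ⟨k + 1, h⟩).1 : ℕ) else ((c ⟨k + 1, h⟩).2 : ℕ))
    else 0

lemma bb_spec (N : ℕ) (l : ℕ →₀ ℕ)
    (c : ∀ k : {x : ℕ // x ∈ Icc 1 N}, Fin (dd l (k : ℕ) + 1) × Fin (dd l (k : ℕ) + 1))
    {k : ℕ} (hk : k ∈ Icc 1 N) (j : Fin 2) :
    bb N l c (k - 1) j
      = aa N l k + (if j = 0 then ((c ⟨k, hk⟩).1 : ℕ) else ((c ⟨k, hk⟩).2 : ℕ)) := by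
  obtain ⟨k', rfl⟩ : ∃ k', k = k' + 1 := ⟨k - 1, by have := (mem_Icc.mp hk).1; omega⟩
  simp only [Nat.add_sub_cancel]
  unfold bb
  rw [dif_pos hk]

noncomputable def Phi (m N : ℕ) (x : TT m N) : {D : DFold 2 // (∑ᶠ k, D.a k) = m} :=
  ⟨⟨aa N x.1.1, bb N x.1.1 x.2,
    by
      intro k j
      unfold bb
      by_cases h : k + 1 ∈ Icc 1 N
      · rw [dif_pos h]
        have h1 : k + 1 ≤ N := (mem_Icc.mp h).2
        rw [aa_succ N _ h1]
        have hle1 : ((x.2 ⟨k + 1, h⟩).1 : ℕ) ≤ dd x.1.1 (k + 1) := Fin.is_le _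
        have hle2 : ((x.2 ⟨k + 1, h⟩).2 : ℕ) ≤ dd x.1.1 (k + 1) := Fin.is_le _
        split_ifs <;> omega
      · rw [dif_neg h]
        have hN : N ≤ k := by simp only [mem_Icc] at h; omega
        rw [aa_zero N _ hN, aa_zero N _ (by omega : N ≤ k + 1)],
    fun k j => Nat.le_add_right _ _,
    ⟨N, fun k hk => aa_zero N _ hk⟩⟩, weight_aa x.1.2⟩

lemma Phi_injective (m N : ℕ) : Function.Injective (Phi m N) := by
  rintro ⟨⟨l, hl⟩, c⟩ ⟨⟨l', hl'⟩, c'⟩ h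
  have hD : (Phi m N ⟨⟨l, hl⟩, c⟩).val = (Phi m N ⟨⟨l', hl'⟩, c'⟩).val := congrArg Subtype.val h
  have ha : aa N l = aa N l' := congrArg DFold.a hD
  have hb : bb N l c = bb N l' c' := congrArg DFold.b hD
  have hll : l = l' := by
    ext k
    by_cases hk : k ∈ Icc 1 N
    · have h1 := (mem_Icc.mp hk).1
      have h2 := (mem_Icc.mp hk).2
      have e1 : l k = k * dd l k := (Nat.mul_div_cancel' (Dset_dvd hl hk)).symm
      have e1' : l' k = k * dd l' k := (Nat.mul_div_cancel' (Dset_dvd hl' hk)).symm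
      rw [e1, e1', aa_sub N l h1 h2, aa_sub N l' h1 h2, ha]
    · rw [Dset_supp hl hk, Dset_supp hl' hk]
  subst hll
  have hc : c = c' := by
    funext k
    obtain ⟨kv, hkmem⟩ := k
    have hb0 := congrFun (congrFun hb (kv - 1)) 0
    have hb1 := congrFun (congrFun hb (kv - 1)) 1
    rw [bb_spec N l c hkmem 0, bb_spec N l c' hkmem 0] at hb0
    rw [bb_spec N l c hkmem 1, bb_spec N l c' hkmem 1] at hb1
    rw [if_pos (rfl : (0 : Fin 2) = 0), if_pos (rfl : (0 : Fin 2) = 0)] at hb0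
    rw [if_neg (by decide : ¬ (1 : Fin 2) = 0), if_neg (by decide : ¬ (1 : Fin 2) = 0)] at hb1
    have e0 : ((c ⟨kv, hkmem⟩).1 : ℕ) = ((c' ⟨kv, hkmem⟩).1 : ℕ) := by omega
    have e1 : ((c ⟨kv, hkmem⟩).2 : ℕ) = ((c' ⟨kv, hkmem⟩).2 : ℕ) := by omega
    exact Prod.ext (Fin.ext e0) (Fin.ext e1)
  subst hc
  rfl

lemma tele (a : ℕ → ℕ) (hmono : ∀ k, a (k + 1) ≤ a k) (M : ℕ) :
    (∑ k ∈ Icc 1 M, k * (a (k - 1) - a k)) + M * a M = ∑ k ∈ range M, a k := by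
  induction M with
  | zero => simp
  | succ M ih =>
    rw [Finset.sum_Icc_succ_top (by omega), Finset.sum_range_succ, ← ih]
    have h1 : (M + 1) * (a (M + 1 - 1) - a (M + 1)) + (M + 1) * a (M + 1) = (M + 1) * a M := by
      rw [← Nat.mul_add]
      congr 1
      have := hmono M
      simp only [Nat.add_sub_cancel]
      omega
    have h2 : (M + 1) * a M = M * a M + a M := by ring
    rw [add_assoc, h1, h2, ← add_assoc]

lemma tele2 (a : ℕ → ℕ) (hanti : ∀ i j, i ≤ j → a j ≤ a i) :
    ∀ M k, k ≤ M → (∑ j ∈ Icc (k + 1) M, (a (j - 1) - a j)) = a k - a M := by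
  intro M
  induction M with
  | zero =>
    intro k hk
    have : k = 0 := by omega
    subst this
    simp
  | succ M ih =>
    intro k hk
    rcases Nat.lt_or_ge k (M + 1) with h | h
    · have hkM : k ≤ M := by omega
      rw [Finset.sum_Icc_succ_top (by omega), ih k hkM]
      have h1 : a (M + 1) ≤ a M := hanti M (M + 1) (by omega)
      have h2 : a M ≤ a k := hanti k M hkM
      simp only [Nat.add_sub_cancel]
      omega
    · have : k = M + 1 := by omega
      subst this
      rw [Finset.Icc_eq_empty (by omega), Finset.sum_empty]
      omega

noncomputable def mkC (N : ℕ) (D : DFold 2) (l : ℕ →₀ ℕ)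
    (hb : ∀ kv ∈ Icc 1 N, ∀ j : Fin 2, D.b (kv - 1) j - D.a kv < dd l kv + 1) :
    ∀ k : {x : ℕ // x ∈ Icc 1 N}, Fin (dd l (k : ℕ) + 1) × Fin (dd l (k : ℕ) + 1) :=
  fun k => (⟨D.b ((k : ℕ) - 1) 0 - D.a (k : ℕ), hb _ k.2 0⟩,
            ⟨D.b ((k : ℕ) - 1) 1 - D.a (k : ℕ), hb _ k.2 1⟩)

@[simp] lemma mkC_fst (N : ℕ) (D : DFold 2) (l : ℕ →₀ ℕ) (hb) (k) :
    ((mkC N D l hb k).1 : ℕ) = D.b ((k : ℕ) - 1) 0 - D.a (k : ℕ) := rfl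

@[simp] lemma mkC_snd (N : ℕ) (D : DFold 2) (l : ℕ →₀ ℕ) (hb) (k) :
    ((mkC N D l hb k).2 : ℕ) = D.b ((k : ℕ) - 1) 1 - D.a (k : ℕ) := rfl

lemma Phi_surjective (m N : ℕ) (hm : m ≤ N) : Function.Surjective (Phi m N) := by
  rintro ⟨D, hD⟩
  have hmono : ∀ k, D.a (k + 1) ≤ D.a k := fun k => le_trans (D.lower k 0) (D.upper k 0)
  have hanti : ∀ i j, i ≤ j → D.a j ≤ D.a i := fun i j hij =>
    (antitone_nat_of_succ_le hmono) hij
  obtain ⟨Nf, hNf⟩ := D.fin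
  have hsum : ∀ M, Nf ≤ M → ∑ k ∈ range M, D.a k = m := by
    intro M hM
    rw [← hD]
    refine (finsum_eq_sum_of_support_subset _ ?_).symm
    intro k hk
    simp only [Function.mem_support] at hk
    simp only [coe_range, Set.mem_Iio]
    by_contra h
    exact hk (hNf k (by omega))
  have hvanish : ∀ k, m ≤ k → D.a k = 0 := by
    intro k hk
    by_contra h
    have h1 : 1 ≤ D.a k := by omega
    have hge : k + 1 ≤ ∑ i ∈ range (max Nf (k + 1)), D.a i := by
      calc k + 1 = ∑ _i ∈ range (k + 1), 1 := by simp
        _ ≤ ∑ i ∈ range (k + 1), D.a i :=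
            Finset.sum_le_sum fun i hi =>
              le_trans h1 (hanti i k (by simp only [mem_range] at hi; omega))
        _ ≤ ∑ i ∈ range (max Nf (k + 1)), D.a i :=
            Finset.sum_le_sum_of_subset (Finset.range_subset_range.mpr (by omega))
    rw [hsum _ (by omega)] at hge
    omega
  have hsumN : ∑ k ∈ range N, D.a k = m := by
    rw [← hD]
    refine (finsum_eq_sum_of_support_subset _ ?_).symm
    intro k hk
    simp only [Function.mem_support] at hk
    simp only [coe_range, Set.mem_Iio]
    by_contra h
    exact hk (hvanish k (by omega))
  have haN : D.a N = 0 := hvanish N hm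
  set l : ℕ →₀ ℕ := Finsupp.onFinset (Icc 1 N) (fun k => k * (D.a (k - 1) - D.a k)) (by
    intro k hk
    simp only [mem_Icc]
    by_contra hc
    apply hk
    rcases Nat.eq_zero_or_pos k with h0 | h1
    · show k * (D.a (k - 1) - D.a k) = 0
      rw [h0]; ring
    · have h2 : N < k := by omega
      have h3 : D.a (k - 1) = 0 := hvanish _ (by omega)
      have h4 : D.a k = 0 := hvanish _ (by omega)
      show k * (D.a (k - 1) - D.a k) = 0
      rw [h3, h4]
      simp) with hldef
  have hlapp : ∀ k, l k = k * (D.a (k - 1) - D.a k) := fun k => rfl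
  have hdd : ∀ k, 1 ≤ k → dd l k = D.a (k - 1) - D.a k := by
    intro k h1
    show l k / k = _
    rw [hlapp, Nat.mul_div_cancel_left _ (by omega)]
  have hl : l ∈ Dset m N := by
    rw [Dset, mem_filter, Finset.mem_finsuppAntidiag]
    refine ⟨⟨?_, Finsupp.support_onFinset_subset⟩, fun k hk => by rw [hlapp]; exact dvd_mul_right _ _⟩
    have ht := tele D.a hmono N
    rw [haN, Nat.mul_zero, Nat.add_zero, hsumN] at ht
    calc ∑ k ∈ Icc 1 N, l k = ∑ k ∈ Icc 1 N, k * (D.a (k - 1) - D.a k) :=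
          Finset.sum_congr rfl fun k _ => hlapp k
      _ = m := ht
  have hA : aa N l = D.a := by
    funext k
    by_cases hk : k ≤ N
    · unfold aa
      have step : ∀ j ∈ Icc (k + 1) N, dd l j = D.a (j - 1) - D.a j := by
        intro j hj
        exact hdd j (by have := (mem_Icc.mp hj).1; omega)
      rw [Finset.sum_congr rfl step, tele2 D.a hanti N k hk, haN, Nat.sub_zero]
    · rw [aa_zero N l (by omega)]
      exact (hvanish k (by omega)).symm
  have hbound : ∀ kv ∈ Icc 1 N, ∀ j : Fin 2, D.b (kv - 1) j - D.a kv < dd l kv + 1 := by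
    intro kv hk j
    obtain ⟨h1, h2⟩ := mem_Icc.mp hk
    have hu : D.b (kv - 1) j ≤ D.a (kv - 1) := D.upper _ _
    rw [hdd kv h1]
    omega
  refine ⟨⟨⟨l, hl⟩, mkC N D l hbound⟩, ?_⟩
  apply Subtype.ext
  apply DFold.ext'
  · exact hA
  · funext k j
    show bb N l (mkC N D l hbound) k j = D.b k j
    by_cases hk1 : k + 1 ∈ Icc 1 N
    · have hb := bb_spec N l (mkC N D l hbound) hk1 j
      rw [Nat.add_sub_cancel] at hb
      rw [hb, mkC_fst, mkC_snd]
      simp only [Nat.add_sub_cancel]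
      rw [show aa N l (k + 1) = D.a (k + 1) from congrFun hA _]
      by_cases hj : j = 0
      · subst hj
        rw [if_pos (rfl : (0 : Fin 2) = 0)]
        have := D.lower k 0
        omega
      · have hj1 : j = 1 := by
          rcases j with ⟨jv, hjv⟩
          apply Fin.ext
          have hne : jv ≠ 0 := fun h0 => hj (Fin.ext h0)
          simp only [Fin.val_one]
          omega
        subst hj1
        rw [if_neg (by decide : ¬ (1 : Fin 2) = 0)]
        have := D.lower k 1
        omega
    · unfold bb
      rw [dif_neg hk1, Nat.add_zero]
      have hN : N ≤ k := by simp only [mem_Icc] at hk1; omega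
      rw [congrFun hA (k + 1), hvanish (k + 1) (by omega)]
      have h1 : D.b k j ≤ D.a k := D.upper k j
      rw [hvanish k (by omega)] at h1
      omega

lemma card_TT (m N : ℕ) :
    Fintype.card (TT m N) = ∑ l ∈ Dset m N, ∏ k ∈ Icc 1 N, (dd l k + 1) ^ 2 := by
  rw [Fintype.card_sigma]
  rw [← Finset.sum_coe_sort (Dset m N) (fun l => ∏ k ∈ Icc 1 N, (dd l k + 1) ^ 2)]
  apply Finset.sum_congr rfl
  intro l _
  rw [Fintype.card_pi]
  rw [← Finset.prod_coe_sort (Icc 1 N) (fun k => (dd l.1 k + 1) ^ 2)]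
  apply Finset.prod_congr rfl
  intro k _
  rw [Fintype.card_prod, Fintype.card_fin]
  ring

lemma sFold_eq (m N : ℕ) (hm : m ≤ N) :
    sFold 2 m = ∑ l ∈ Dset m N, ∏ k ∈ Icc 1 N, (dd l k + 1) ^ 2 := by
  rw [← card_TT m N, ← Nat.card_eq_fintype_card, sFold, ← Nat.card_coe_set_eq]
  exact (Nat.card_congr
    (Equiv.ofBijective (Phi m N) ⟨Phi_injective m N, Phi_surjective m N hm⟩)).symm

lemma sFold_coeff (m N : ℕ) (hm : m ≤ N) :
    (sFold 2 m : ℤ) = coeff m (∏ k ∈ Icc 1 N, Fk k) := by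
  rw [coeff_prod, sFold_eq m N hm]
  have hfil : ∑ l ∈ Dset m N, ∏ i ∈ Icc 1 N, coeff (l i) (Fk i)
      = ∑ l ∈ Finset.finsuppAntidiag (Icc 1 N) m, ∏ i ∈ Icc 1 N, coeff (l i) (Fk i) := by
    apply Finset.sum_filter_of_ne
    intro l _ hne k hk
    by_contra hndvd
    apply hne
    apply Finset.prod_eq_zero hk
    rw [Fk, coeff_mk, if_neg hndvd]
  rw [← hfil]
  push_cast
  apply Finset.sum_congr rfl
  intro l hl
  apply Finset.prod_congr rfl
  intro k hk
  rw [Fk, coeff_mk, if_pos (Dset_dvd hl hk)]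
  push_cast
  rfl


end SchmidtAux

open SchmidtAux in
/-- The generating function identity
`∑_{n≥0} s_2(n) qⁿ = ∏_{n≥1} (1 + qⁿ) / (1 - qⁿ)³` in `ℤ⟦q⟧`, stated
coefficient-wise after clearing denominators: both sides of the infinite-product
identity have `n`-th coefficient equal to that of the partial product over the first
`N ≥ n` factors, since every further factor is `1 + O(q^{N+1})`. -/
theorem schmidt_twofold_generating_function (n N : ℕ) (hnN : n ≤ N) :
    PowerSeries.coeff n
        ((PowerSeries.mk fun m => (sFold 2 m : ℤ)) *
          ∏ m ∈ Finset.Icc 1 N, (1 - (X : ℤ⟦X⟧) ^ m) ^ 3) =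
      PowerSeries.coeff n
        (∏ m ∈ Finset.Icc 1 N, (1 + (X : ℤ⟦X⟧) ^ m)) := by

  have key : ∀ i, i ≤ n →
      coeff i (PowerSeries.mk fun m => (sFold 2 m : ℤ)) = coeff i (∏ k ∈ Icc 1 N, Fk k) := by
    intro i hi
    rw [coeff_mk, sFold_coeff i N (le_trans hi hnN)]
  have step1 : coeff n
      ((PowerSeries.mk fun m => (sFold 2 m : ℤ)) * ∏ m ∈ Icc 1 N, (1 - (X : ℤ⟦X⟧) ^ m) ^ 3)
      = coeff n ((∏ k ∈ Icc 1 N, Fk k) * ∏ m ∈ Icc 1 N, (1 - (X : ℤ⟦X⟧) ^ m) ^ 3) := by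
    rw [coeff_mul, coeff_mul]
    apply Finset.sum_congr rfl
    rintro ⟨i, j⟩ hij
    have hij' : i + j = n := Finset.HasAntidiagonal.mem_antidiagonal.mp hij
    rw [key i (by omega)]
  rw [step1, ← Finset.prod_mul_distrib]
  congr 1
  apply Finset.prod_congr rfl
  intro k hk
  exact Fk_mul_cubed (mem_Icc.mp hk).1
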